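/- Let X and Y be finite-dimensional real Banach spaces and T : X → Y a linear operator with ||T|| = 1. If x ∈ M_T ∩ Ext(B_X) and y* ∈ Ext J(Tx), then y* ∈ M_{T*} ∩ Ext(B_{Y*}) and x (viewed as an element of X** = X) belongs to Ext J(T* y*). -/

import Mathlib

open Metric

/-- The set of norm-one supporting functionals of `z`. -/
def Jset {E : Type*} [NormedAddCommGroup E] [NormedSpace ℝ E] (z : E) :
    Set (E →L[ℝ] ℝ) := {f | ‖f‖ = 1 ∧ f z = 1}

open Module in
lemma incl_surj {X : Type*} [NormedAddCommGroup X] [NormedSpace ℝ X] [FiniteDimensional ℝ X] :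
    Function.Surjective (NormedSpace.inclusionInDoubleDual ℝ X) := by
  have hd : ∀ (E : Type _) [NormedAddCommGroup E] [NormedSpace ℝ E] [FiniteDimensional ℝ E],
      finrank ℝ (StrongDual ℝ E) = finrank ℝ E := by
    intro E _ _ _
    rw [← Subspace.dual_finrank_eq (K := ℝ) (V := E)]
    exact (LinearMap.toContinuousLinearMap (𝕜 := ℝ) (E := E) (F' := ℝ)).symm.finrank_eq
  have h : finrank ℝ X = finrank ℝ (StrongDual ℝ (StrongDual ℝ X)) := by rw [hd, hd]
  exact (LinearMap.injective_iff_surjective_of_finrank_eq_finrank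
      (f := (NormedSpace.inclusionInDoubleDual ℝ X).toLinearMap) h).mp
    (NormedSpace.inclusionInDoubleDualLi ℝ (E := X)).injective

lemma Jmem_of_seg {E : Type*} [NormedAddCommGroup E] [NormedSpace ℝ E] {z : E} (hz : ‖z‖ = 1)
    {f g : E →L[ℝ] ℝ} (hf : ‖f‖ ≤ 1) (hg : ‖g‖ ≤ 1)
    {a b : ℝ} (ha : 0 < a) (hb : 0 < b) (hab : a + b = 1) (h : a * f z + b * g z = 1) :
    f ∈ Jset z ∧ g ∈ Jset z := by
  have hfz : |f z| ≤ 1 := by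
    have := f.unit_le_opNorm z hz.le
    rw [Real.norm_eq_abs] at this; linarith
  have hgz : |g z| ≤ 1 := by
    have := g.unit_le_opNorm z hz.le
    rw [Real.norm_eq_abs] at this; linarith
  have hfz1 : f z = 1 := by cases abs_le.mp hfz; cases abs_le.mp hgz; nlinarith
  have hgz1 : g z = 1 := by cases abs_le.mp hfz; cases abs_le.mp hgz; nlinarith
  have hfn : ‖f‖ = 1 := le_antisymm hf (by calc
    (1:ℝ) = ‖f z‖ := by rw [hfz1]; simp
    _ ≤ ‖f‖ := f.unit_le_opNorm z hz.le)
  have hgn : ‖g‖ = 1 := le_antisymm hg (by calc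
    (1:ℝ) = ‖g z‖ := by rw [hgz1]; simp
    _ ≤ ‖g‖ := g.unit_le_opNorm z hz.le)
  exact ⟨⟨hfn, hfz1⟩, ⟨hgn, hgz1⟩⟩

theorem stmt7 {X Y : Type*} [NormedAddCommGroup X] [NormedSpace ℝ X] [FiniteDimensional ℝ X]
    [NormedAddCommGroup Y] [NormedSpace ℝ Y] [FiniteDimensional ℝ Y]
    (T : X →L[ℝ] Y) (hT : ‖T‖ = 1)
    (x : X) (hx : ‖x‖ = 1 ∧ ‖T x‖ = 1) (hxext : x ∈ Set.extremePoints ℝ (closedBall (0 : X) 1))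
    (ystar : Y →L[ℝ] ℝ) (hystar : ystar ∈ Set.extremePoints ℝ (Jset (T x))) :
    (‖ystar‖ = 1 ∧ ‖ystar.comp T‖ = 1) ∧
    ystar ∈ Set.extremePoints ℝ (closedBall (0 : Y →L[ℝ] ℝ) 1) ∧
    NormedSpace.inclusionInDoubleDual ℝ X x ∈ Set.extremePoints ℝ (Jset (ystar.comp T)) := by
  obtain ⟨hxn, hTxn⟩ := hx
  rw [mem_extremePoints] at hystar
  obtain ⟨⟨hyn, hyTx⟩, hyext⟩ := hystar
  have happ : (ystar.comp T) x = 1 := hyTx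
  have hcomp : ‖ystar.comp T‖ = 1 := by
    refine le_antisymm ?_ ?_
    · calc ‖ystar.comp T‖ ≤ ‖ystar‖ * ‖T‖ := ContinuousLinearMap.opNorm_comp_le _ _
        _ = 1 := by rw [hyn, hT]; ring
    · calc (1:ℝ) = ‖(ystar.comp T) x‖ := by rw [happ]; simp
        _ ≤ ‖ystar.comp T‖ := (ystar.comp T).unit_le_opNorm x hxn.le
  refine ⟨⟨hyn, hcomp⟩, ?_, ?_⟩
  · rw [mem_extremePoints]
    refine ⟨mem_closedBall_zero_iff.mpr hyn.le, ?_⟩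
    intro f hf g hg hseg
    obtain ⟨a, b, ha, hb, hab, heq⟩ := hseg
    have hev : a * f (T x) + b * g (T x) = 1 := by
      have := congrArg (fun u : Y →L[ℝ] ℝ => u (T x)) heq
      simpa [smul_eq_mul, hyTx] using this
    obtain ⟨hfJ, hgJ⟩ := Jmem_of_seg hTxn (mem_closedBall_zero_iff.mp hf)
      (mem_closedBall_zero_iff.mp hg) ha hb hab hev
    exact hyext f hfJ g hgJ ⟨a, b, ha, hb, hab, heq⟩
  · set ι := NormedSpace.inclusionInDoubleDual ℝ X with hι
    have hιn : ∀ u : X, ‖ι u‖ = ‖u‖ := fun u =>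
      (NormedSpace.inclusionInDoubleDualLi ℝ (E := X)).norm_map u
    rw [mem_extremePoints]
    refine ⟨⟨by rw [hιn, hxn], by exact happ⟩, ?_⟩
    intro F hF G hG hseg
    obtain ⟨u, rfl⟩ := incl_surj F
    obtain ⟨v, rfl⟩ := incl_surj G
    obtain ⟨a, b, ha, hb, hab, heq⟩ := hseg
    have hinj : Function.Injective ι := (NormedSpace.inclusionInDoubleDualLi ℝ (E := X)).injective
    have hxseg : a • u + b • v = x := by
      apply hinj
      rw [← heq]; simp [hι, map_add, map_smul]
    have hu : u ∈ closedBall (0:X) 1 := by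
      rw [mem_closedBall_zero_iff, ← hιn]; exact hF.1.le
    have hv : v ∈ closedBall (0:X) 1 := by
      rw [mem_closedBall_zero_iff, ← hιn]; exact hG.1.le
    rw [mem_extremePoints] at hxext
    obtain ⟨hux, hvx⟩ := hxext.2 u hu v hv ⟨a, b, ha, hb, hab, hxseg⟩
    exact ⟨by rw [hux], by rw [hvx]⟩
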